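/- Let L be a nonarchimedean field and A = L⟨x₁,...,x_d⟩. If f ∈ A does not lie in the ideal (x₁⋯x_d), then there exists N such that the coset f + p^N·O_L⟨x₁,...,x_d⟩ is disjoint from the ideal (x₁⋯x_d). (Here p is a pseudouniformizer of L.) -/

import Mathlib

/-!
STATEMENT 1: For `L` a complete nonarchimedean field with pseudouniformizer `p`, and
`A = L⟨x₁,…,x_d⟩` the Tate algebra, if `f ∈ A` does not lie in the ideal `(x₁⋯x_d)`,
then there is `N` such that the coset `f + p^N·O_L⟨x₁,…,x_d⟩` is disjoint from `(x₁⋯x_d)`.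

We model the Tate algebra as the set of multivariate power series whose coefficients tend
to `0`; `O_L⟨x₁,…,x_d⟩` is the subset of those with all coefficients of norm `≤ 1`.
-/

open Filter

noncomputable section

variable {L : Type*} [NontriviallyNormedField L] {d : ℕ}

/-- `f` belongs to the Tate algebra `L⟨x₁,…,x_d⟩`: its coefficients tend to `0`. -/
def IsTate (f : MvPowerSeries (Fin d) L) : Prop :=
  Tendsto (fun k => ‖MvPowerSeries.coeff k f‖) cofinite (nhds 0)

theorem stmt_1 [CompleteSpace L] (p : L) (hp0 : 0 < ‖p‖) (hp1 : ‖p‖ < 1)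
    (f : MvPowerSeries (Fin d) L) (hf : IsTate f)
    (hnot : ¬ ∃ g : MvPowerSeries (Fin d) L, IsTate g ∧
        f = (∏ i : Fin d, MvPowerSeries.X i) * g) :
    ∃ N : ℕ, ∀ h : MvPowerSeries (Fin d) L, IsTate h →
      (∀ k, ‖MvPowerSeries.coeff k h‖ ≤ 1) →
      ¬ ∃ g : MvPowerSeries (Fin d) L, IsTate g ∧
          f + (p ^ N) • h = (∏ i : Fin d, MvPowerSeries.X i) * g := by
  classical
  set e : Fin d →₀ ℕ := ∑ i : Fin d, Finsupp.single i 1 with he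
  have hprod : (∏ i : Fin d, MvPowerSeries.X i : MvPowerSeries (Fin d) L)
      = MvPowerSeries.monomial e 1 := by
    rw [he]
    induction (Finset.univ : Finset (Fin d)) using Finset.induction with
    | empty => simp [MvPowerSeries.monomial_zero_eq_C]
    | insert _ _ hx ih =>
        rw [Finset.prod_insert hx, Finset.sum_insert hx, ih, MvPowerSeries.X,
          MvPowerSeries.monomial_mul_monomial, one_mul]
  -- find a bad coefficient
  have hbad : ∃ k : Fin d →₀ ℕ, ¬ e ≤ k ∧ MvPowerSeries.coeff k f ≠ 0 := by
    by_contra hc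
    push_neg at hc
    apply hnot
    refine ⟨id (α := MvPowerSeries (Fin d) L) (fun m => MvPowerSeries.coeff (m + e) f), ?_, ?_⟩
    · have hinj : Function.Injective (fun m : Fin d →₀ ℕ => m + e) :=
        fun a b hab => by simpa using add_left_injective e hab
      exact hf.comp hinj.tendsto_cofinite
    · ext k
      rw [hprod, MvPowerSeries.coeff_monomial_mul]
      split_ifs with hek
      · simp only [one_mul, id, MvPowerSeries.coeff_apply, tsub_add_cancel_of_le hek]
        exact (congrArg f (tsub_add_cancel_of_le hek)).symm
      · exact hc k hek
  obtain ⟨k₀, hk₀, hc0⟩ := hbad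
  have hcpos : 0 < ‖MvPowerSeries.coeff k₀ f‖ := norm_pos_iff.mpr hc0
  obtain ⟨N, hN⟩ := exists_pow_lt_of_lt_one hcpos hp1
  refine ⟨N, fun h _ hh1 ⟨g, _, hg⟩ => ?_⟩
  have := congrArg (MvPowerSeries.coeff k₀) hg
  rw [map_add, hprod, MvPowerSeries.coeff_monomial_mul, if_neg hk₀] at this
  have hsm : MvPowerSeries.coeff k₀ ((p ^ N) • h) = p ^ N * MvPowerSeries.coeff k₀ h := by
    simp [MvPowerSeries.coeff_smul]
  rw [hsm] at this
  have hnorm : ‖p ^ N * MvPowerSeries.coeff k₀ h‖ < ‖MvPowerSeries.coeff k₀ f‖ := by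
    rw [norm_mul, norm_pow]
    calc ‖p‖ ^ N * ‖MvPowerSeries.coeff k₀ h‖ ≤ ‖p‖ ^ N * 1 := by
          exact mul_le_mul_of_nonneg_left (hh1 k₀) (by positivity)
      _ = ‖p‖ ^ N := mul_one _
      _ < _ := hN
  have : MvPowerSeries.coeff k₀ f = -(p ^ N * MvPowerSeries.coeff k₀ h) := by
    linear_combination this
  rw [this, norm_neg] at hnorm
  exact lt_irrefl _ hnorm

end
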